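/- Let d ≥ 2 be an integer. There exist a constant K and an integer N₀ such that for all N ≥ N₀, Σ_{λ' ∈ Λ_{N+1}} (Σ_{i ∈ S(λ')} r_{λ'}(i))² ≤ (K/N²) · Σ_{λ' ∈ Λ_{N+1}} (#S(λ'))² · ∏_{j=1}^d p_j(λ')². (In the notation of the paper's Lemma 1, t₂ = O(N^{−2}).) -/

import Mathlib

open Finset

/-- The value after index `i` in `λ`, with the convention `λ_{d+1} := 0`. -/
def nextVal (d : ℕ) (lam : Fin d → ℕ) (i : Fin d) : ℕ :=
  if h : (i : ℕ) + 1 < d then lam ⟨(i : ℕ) + 1, h⟩ else 0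

/-- `Λ_M`: nonincreasing `d`-tuples of natural numbers summing to `M`. -/
def Lam (d M : ℕ) : Finset (Fin d → ℕ) :=
  (Fintype.piFinset fun _ => Finset.range (M + 1)).filter
    (fun lam => (∀ i : Fin d, nextVal d lam i ≤ lam i) ∧ ∑ j, lam j = M)

/-- `P_M`: strictly decreasing `d`-tuples of positive naturals summing to `M`. -/
def PP (d M : ℕ) : Finset (Fin d → ℕ) :=
  (Lam d M).filter (fun lam => ∀ i : Fin d, nextVal d lam i < lam i)

/-- The gaps `p_j(λ) = λ_j - λ_{j+1}`. -/
def pgap (d : ℕ) (lam : Fin d → ℕ) (j : Fin d) : ℕ := lam j - nextVal d lam j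

/-- `S(λ)`: the set of indices `i` with `λ_i > λ_{i+1}`. -/
def SS (d : ℕ) (lam : Fin d → ℕ) : Finset (Fin d) :=
  Finset.univ.filter (fun i => nextVal d lam i < lam i)

/-- `λ - e_i`: decrease the `i`-th entry by one. -/
def dec (d : ℕ) (lam : Fin d → ℕ) (i : Fin d) : Fin d → ℕ :=
  Function.update lam i (lam i - 1)

/-- The previous index `i - 1`. -/
def prev (d : ℕ) (i : Fin d) : Fin d :=
  ⟨(i : ℕ) - 1, Nat.lt_of_le_of_lt (Nat.sub_le _ _) i.isLt⟩

/-- `p_E(λ) = ∏_{j ∉ E} p_j(λ)`. -/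
def pE (d : ℕ) (lam : Fin d → ℕ) (E : Finset (Fin d)) : ℕ :=
  ∏ j ∈ Eᶜ, pgap d lam j

/-- `r_{λ'}(i) = -p_{{i}}(λ') + (p_{{i-1}}(λ') - p_{{i,i-1}}(λ')` if `i > 1`, else `0)`. -/
def rr (d : ℕ) (lam : Fin d → ℕ) (i : Fin d) : ℤ :=
  -(pE d lam {i} : ℤ) +
    (if 0 < (i : ℕ) then
      ((pE d lam {prev d i} : ℤ) - (pE d lam ({i, prev d i} : Finset (Fin d)) : ℤ))
    else 0)


namespace Stmt12Aux


/-- `u` as a function on `ℕ`. -/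
def uv (d : ℕ) (u : Fin d → ℕ) (t : ℕ) : ℕ := if h : t < d then u ⟨t, h⟩ else 0

/-- tail sums of gaps `m + u k`, over `max t 1 ≤ k < d`. -/
def ts (d m : ℕ) (u : Fin d → ℕ) (t : ℕ) : ℕ :=
  ∑ k ∈ Finset.Ico (max t 1) d, (m + uv d u k)

def Tsum (d m : ℕ) (u : Fin d → ℕ) : ℕ := ∑ t ∈ Finset.Ico 1 d, ts d m u t

/-- the constructed element of `Λ_{N+1}`. -/
def G (d N m : ℕ) (u : Fin d → ℕ) : Fin d → ℕ :=
  fun j => if (j : ℕ) = 0 then (N + 1) - Tsum d m u else ts d m u (j : ℕ)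

lemma uv_le (d m : ℕ) (u : Fin d → ℕ) (hu : ∀ k, u k < m) (t : ℕ) : uv d u t ≤ m := by
  unfold uv; split
  · exact le_of_lt (hu _)
  · exact Nat.zero_le _

lemma ts_le (d m : ℕ) (u : Fin d → ℕ) (hu : ∀ k, u k < m) (t : ℕ) :
    ts d m u t ≤ d * (2 * m) := by
  calc ts d m u t ≤ ∑ k ∈ Finset.Ico (max t 1) d, (2 * m) := by
        apply Finset.sum_le_sum
        intro k _
        have := uv_le d m u hu k
        omega
    _ = (Finset.Ico (max t 1) d).card * (2 * m) := by rw [Finset.sum_const, smul_eq_mul]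
    _ ≤ d * (2 * m) := by
        apply Nat.mul_le_mul_right
        rw [Nat.card_Ico]; omega

lemma Tsum_le (d m : ℕ) (u : Fin d → ℕ) (hu : ∀ k, u k < m) :
    Tsum d m u ≤ d * (d * (2 * m)) := by
  calc Tsum d m u ≤ ∑ t ∈ Finset.Ico 1 d, (d * (2 * m)) :=
        Finset.sum_le_sum fun t _ => ts_le d m u hu t
    _ = (Finset.Ico 1 d).card * (d * (2 * m)) := by rw [Finset.sum_const, smul_eq_mul]
    _ ≤ d * (d * (2 * m)) := by
        apply Nat.mul_le_mul_right
        rw [Nat.card_Ico]; omega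

lemma budget (d N m : ℕ) (hd : 2 ≤ d) (key : 4 * d ^ 2 * m ≤ N)
    (u : Fin d → ℕ) (hu : ∀ k, u k < m) :
    Tsum d m u + ts d m u 1 + m ≤ N + 1 := by
  have h1 := Tsum_le d m u hu
  have h2 := ts_le d m u hu 1
  have h3 : d * (d * (2 * m)) + d * (2 * m) + m ≤ 4 * d ^ 2 * m := by nlinarith
  omega

lemma ts_top (d m : ℕ) (hd : 1 ≤ d) (u : Fin d → ℕ) : ts d m u d = 0 := by
  unfold ts
  rw [max_eq_left hd, Finset.Ico_self, Finset.sum_empty]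

lemma ts_succ (d m : ℕ) (u : Fin d → ℕ) {t : ℕ} (h1 : 1 ≤ t) (h2 : t < d) :
    ts d m u t = (m + uv d u t) + ts d m u (t + 1) := by
  unfold ts
  rw [max_eq_left h1, max_eq_left (by omega), Finset.sum_eq_sum_Ico_succ_bot h2]

lemma nextVal_G (d N m : ℕ) (hd : 1 ≤ d) (u : Fin d → ℕ) (j : Fin d) :
    nextVal d (G d N m u) j = ts d m u ((j : ℕ) + 1) := by
  unfold nextVal
  split
  · show G d N m u _ = _
    unfold G
    simp
  · have : (j : ℕ) + 1 = d := by have := j.isLt; omega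
    rw [this, ts_top d m hd u]

lemma gap_ge (d N m : ℕ) (hd : 2 ≤ d) (key : 4 * d ^ 2 * m ≤ N)
    (u : Fin d → ℕ) (hu : ∀ k, u k < m) (j : Fin d) :
    nextVal d (G d N m u) j + m ≤ G d N m u j := by
  rw [nextVal_G d N m (by omega) u j]
  by_cases hj : (j : ℕ) = 0
  · have hb := budget d N m hd key u hu
    have hts1 : ts d m u ((j : ℕ) + 1) = ts d m u 1 := by rw [hj]
    rw [hts1]
    show ts d m u 1 + m ≤ G d N m u j
    unfold G
    rw [if_pos hj]
    omega
  · show ts d m u ((j : ℕ) + 1) + m ≤ G d N m u j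
    unfold G
    rw [if_neg hj]
    rcases Nat.lt_or_ge (j : ℕ) d with h | h
    · rw [ts_succ d m u (by omega) h]
      omega
    · exact absurd j.isLt (by omega)

lemma sum_G (d N m : ℕ) (hd : 2 ≤ d) (key : 4 * d ^ 2 * m ≤ N)
    (u : Fin d → ℕ) (hu : ∀ k, u k < m) :
    ∑ j, G d N m u j = N + 1 := by
  have hb := budget d N m hd key u hu
  have h0 : ∑ j : Fin d, G d N m u j
      = ∑ t ∈ Finset.range d, (if t = 0 then (N + 1) - Tsum d m u else ts d m u t) := by
    exact Fin.sum_univ_eq_sum_range (fun t => if t = 0 then (N + 1) - Tsum d m u else ts d m u t) d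
  rw [h0, Finset.range_eq_Ico, Finset.sum_eq_sum_Ico_succ_bot (by omega : 0 < d)]
  rw [if_pos rfl]
  have h1 : ∑ t ∈ Finset.Ico 1 d, (if t = 0 then (N + 1) - Tsum d m u else ts d m u t)
      = Tsum d m u := by
    apply Finset.sum_congr rfl
    intro t ht
    rw [Finset.mem_Ico] at ht
    rw [if_neg (by omega)]
  rw [h1]
  omega

lemma G_le (d N m : ℕ) (hd : 2 ≤ d) (key : 4 * d ^ 2 * m ≤ N)
    (u : Fin d → ℕ) (hu : ∀ k, u k < m) (j : Fin d) :
    G d N m u j ≤ N + 1 := by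
  unfold G
  split
  · omega
  · have h1 := ts_le d m u hu (j : ℕ)
    nlinarith

lemma G_mem_Lam (d N m : ℕ) (hd : 2 ≤ d) (key : 4 * d ^ 2 * m ≤ N)
    (u : Fin d → ℕ) (hu : ∀ k, u k < m) :
    G d N m u ∈ Lam d (N + 1) := by
  rw [Lam, Finset.mem_filter]
  refine ⟨?_, ?_, sum_G d N m hd key u hu⟩
  · rw [Fintype.mem_piFinset]
    intro j
    rw [Finset.mem_range]
    have := G_le d N m hd key u hu j
    omega
  · intro i
    have := gap_ge d N m hd key u hu i
    omega

lemma pgap_G_ge (d N m : ℕ) (hd : 2 ≤ d) (key : 4 * d ^ 2 * m ≤ N)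
    (u : Fin d → ℕ) (hu : ∀ k, u k < m) (j : Fin d) :
    m ≤ pgap d (G d N m u) j := by
  have := gap_ge d N m hd key u hu j
  unfold pgap
  omega

/-- the parameter domain -/
def DD (d m : ℕ) : Finset (Fin d → ℕ) :=
  Fintype.piFinset (fun j : Fin d => if (j : ℕ) = 0 then ({0} : Finset ℕ) else Finset.range m)

lemma mem_DD_lt (d m : ℕ) (hm : 1 ≤ m) (u : Fin d → ℕ) (hu : u ∈ DD d m) :
    ∀ k, u k < m := by
  intro k
  rw [DD, Fintype.mem_piFinset] at hu
  have := hu k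
  split at this
  · rw [Finset.mem_singleton] at this; omega
  · rwa [Finset.mem_range] at this

lemma mem_DD_zero (d m : ℕ) (u : Fin d → ℕ) (hu : u ∈ DD d m) :
    ∀ j : Fin d, (j : ℕ) = 0 → u j = 0 := by
  intro j hj
  rw [DD, Fintype.mem_piFinset] at hu
  have := hu j
  rw [if_pos hj, Finset.mem_singleton] at this
  exact this

lemma card_DD (d m : ℕ) (hd : 1 ≤ d) : (DD d m).card = m ^ (d - 1) := by
  rw [DD, Fintype.card_piFinset]
  have h0 : ∀ j : Fin d,
      ((if (j : ℕ) = 0 then ({0} : Finset ℕ) else Finset.range m)).card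
        = (if (j : ℕ) = 0 then 1 else m) := by
    intro j; split <;> simp
  rw [Finset.prod_congr rfl (fun j _ => h0 j)]
  have h1 : ∏ j : Fin d, (if (j : ℕ) = 0 then 1 else m)
      = ∏ t ∈ Finset.range d, (if t = 0 then 1 else m) :=
    Fin.prod_univ_eq_prod_range (fun t => if t = 0 then 1 else m) d
  rw [h1, Finset.range_eq_Ico, Finset.prod_eq_prod_Ico_succ_bot (by omega : 0 < d)]
  rw [if_pos rfl, one_mul]
  have h2 : ∏ t ∈ Finset.Ico 1 d, (if t = 0 then 1 else m)
      = ∏ t ∈ Finset.Ico 1 d, m := by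
    apply Finset.prod_congr rfl
    intro t ht
    rw [Finset.mem_Ico] at ht
    rw [if_neg (by omega)]
  rw [h2, Finset.prod_const, Nat.card_Ico]

lemma G_injOn (d N m : ℕ) (hd : 2 ≤ d) (hm : 1 ≤ m) :
    ∀ u ∈ DD d m, ∀ u' ∈ DD d m, G d N m u = G d N m u' → u = u' := by
  intro u hu u' hu' h
  have hts : ∀ t, 1 ≤ t → t ≤ d → ts d m u t = ts d m u' t := by
    intro t h1 h2
    rcases eq_or_lt_of_le h2 with h3 | h3
    · rw [h3, ts_top d m (by omega) u, ts_top d m (by omega) u']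
    · have := congrFun h ⟨t, h3⟩
      unfold G at this
      rw [if_neg (by simpa using (by omega : ¬ t = 0)), if_neg (by simpa using (by omega : ¬ t = 0))] at this
      exact this
  have huv : ∀ t, 1 ≤ t → t < d → uv d u t = uv d u' t := by
    intro t h1 h2
    have e1 := ts_succ d m u h1 h2
    have e2 := ts_succ d m u' h1 h2
    have e3 := hts t h1 (le_of_lt h2)
    have e4 := hts (t + 1) (by omega) (by omega)
    omega
  funext j
  by_cases hj : (j : ℕ) = 0
  · rw [mem_DD_zero d m u hu j hj, mem_DD_zero d m u' hu' j hj]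
  · have h1 := huv (j : ℕ) (by omega) j.isLt
    unfold uv at h1
    rw [dif_pos j.isLt, dif_pos j.isLt] at h1
    simpa using h1

set_option maxHeartbeats 1000000 in
lemma Rn_ge (d N m : ℕ) (hd : 2 ≤ d) (hm : 1 ≤ m) (key : 4 * d ^ 2 * m ≤ N) :
    m ^ (3 * d - 1) ≤
      ∑ lam ∈ Lam d (N + 1), (SS d lam).card ^ 2 * ∏ j, (pgap d lam j) ^ 2 := by
  classical
  have hstep : ∀ u ∈ DD d m, (m ^ 2) ^ d ≤
      (SS d (G d N m u)).card ^ 2 * ∏ j, (pgap d (G d N m u) j) ^ 2 := by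
    intro u hu
    have hu' := mem_DD_lt d m hm u hu
    have hcard : 1 ≤ (SS d (G d N m u)).card := by
      rw [Finset.one_le_card]
      refine ⟨⟨0, by omega⟩, ?_⟩
      rw [SS, Finset.mem_filter]
      refine ⟨Finset.mem_univ _, ?_⟩
      have := gap_ge d N m hd key u hu' ⟨0, by omega⟩
      omega
    have hprod : (m ^ 2) ^ d ≤ ∏ j, (pgap d (G d N m u) j) ^ 2 := by
      have : ∏ _j : Fin d, m ^ 2 ≤ ∏ j, (pgap d (G d N m u) j) ^ 2 := by
        apply Finset.prod_le_prod'
        intro j _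
        exact Nat.pow_le_pow_left (pgap_G_ge d N m hd key u hu' j) 2
      simpa using this
    calc (m ^ 2) ^ d = 1 * (m ^ 2) ^ d := (one_mul _).symm
      _ ≤ (SS d (G d N m u)).card ^ 2 * ∏ j, (pgap d (G d N m u) j) ^ 2 :=
          Nat.mul_le_mul (by nlinarith) hprod
  calc m ^ (3 * d - 1) = m ^ (d - 1) * (m ^ 2) ^ d := by
        rw [← pow_mul, ← pow_add]
        congr 1
        omega
    _ = ∑ _u ∈ DD d m, (m ^ 2) ^ d := by
        rw [Finset.sum_const, smul_eq_mul, card_DD d m (by omega)]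
    _ ≤ ∑ u ∈ DD d m, ((SS d (G d N m u)).card ^ 2 * ∏ j, (pgap d (G d N m u) j) ^ 2) :=
        Finset.sum_le_sum hstep
    _ = ∑ lam ∈ (DD d m).image (G d N m),
          ((SS d lam).card ^ 2 * ∏ j, (pgap d lam j) ^ 2) :=
        (Finset.sum_image (f := fun lam => (SS d lam).card ^ 2 * ∏ j, (pgap d lam j) ^ 2) (G_injOn d N m hd hm)).symm
    _ ≤ ∑ lam ∈ Lam d (N + 1), (SS d lam).card ^ 2 * ∏ j, (pgap d lam j) ^ 2 := by
        apply Finset.sum_le_sum_of_subset_of_nonneg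
        · intro lam hlam
          rw [Finset.mem_image] at hlam
          obtain ⟨u, hu, rfl⟩ := hlam
          exact G_mem_Lam d N m hd key u (mem_DD_lt d m hm u hu)
        · intro _ _ _; exact Nat.zero_le _



lemma lam_entry_le (d M : ℕ) (lam : Fin d → ℕ) (h : lam ∈ Lam d M) (j : Fin d) :
    lam j ≤ M := by
  rw [Lam, Finset.mem_filter] at h
  have := (Fintype.mem_piFinset.mp h.1) j
  rw [Finset.mem_range] at this
  omega

lemma pE_le (d M : ℕ) (hM : 1 ≤ M) (lam : Fin d → ℕ) (h : lam ∈ Lam d M)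
    (E : Finset (Fin d)) (hE : E.Nonempty) : pE d lam E ≤ M ^ (d - 1) := by
  have h1 : pE d lam E ≤ M ^ (Eᶜ.card) := by
    rw [pE]
    calc ∏ j ∈ Eᶜ, pgap d lam j ≤ ∏ _j ∈ Eᶜ, M := by
          apply Finset.prod_le_prod'
          intro j _
          have := lam_entry_le d M lam h j
          rw [pgap]; omega
      _ = M ^ Eᶜ.card := Finset.prod_const M
  have h2 : Eᶜ.card ≤ d - 1 := by
    have hc : Eᶜ.card = d - E.card := by
      rw [Finset.card_compl, Fintype.card_fin]
    have h3 : 1 ≤ E.card := Finset.one_le_card.mpr hE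
    omega
  exact le_trans h1 (Nat.pow_le_pow_right hM h2)

lemma rr_bound (d M : ℕ) (hM : 1 ≤ M) (lam : Fin d → ℕ) (h : lam ∈ Lam d M) (i : Fin d) :
    -(3 * ((M ^ (d - 1) : ℕ) : ℤ)) ≤ rr d lam i ∧
      rr d lam i ≤ 3 * ((M ^ (d - 1) : ℕ) : ℤ) := by
  have h1 : pE d lam {i} ≤ M ^ (d - 1) :=
    pE_le d M hM lam h _ ⟨i, Finset.mem_singleton_self i⟩
  have h2 : pE d lam {prev d i} ≤ M ^ (d - 1) :=
    pE_le d M hM lam h _ ⟨prev d i, Finset.mem_singleton_self _⟩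
  have h3 : pE d lam {i, prev d i} ≤ M ^ (d - 1) :=
    pE_le d M hM lam h _ ⟨i, Finset.mem_insert_self _ _⟩
  rw [rr]
  split <;> constructor <;> omega

lemma card_SS_le (d : ℕ) (lam : Fin d → ℕ) : (SS d lam).card ≤ d := by
  calc (SS d lam).card ≤ (Finset.univ : Finset (Fin d)).card :=
        Finset.card_le_card (Finset.filter_subset _ _)
    _ = d := by simp

lemma sum_rr_sq_le (d M : ℕ) (hM : 1 ≤ M) (lam : Fin d → ℕ) (h : lam ∈ Lam d M) :
    (∑ i ∈ SS d lam, (rr d lam i : ℝ)) ^ 2 ≤ ((3 * d * M ^ (d - 1) : ℕ) : ℝ) ^ 2 := by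
  have hcard := card_SS_le d lam
  have hub : (∑ i ∈ SS d lam, rr d lam i) ≤ (3 * d * M ^ (d - 1) : ℤ) := by
    calc ∑ i ∈ SS d lam, rr d lam i ≤ ∑ _i ∈ SS d lam, (3 * ((M ^ (d - 1) : ℕ) : ℤ)) :=
          Finset.sum_le_sum (fun i _ => (rr_bound d M hM lam h i).2)
      _ = ((SS d lam).card : ℤ) * (3 * ((M ^ (d - 1) : ℕ) : ℤ)) := by
          rw [Finset.sum_const, nsmul_eq_mul]
      _ ≤ (d : ℤ) * (3 * ((M ^ (d - 1) : ℕ) : ℤ)) := by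
          apply mul_le_mul_of_nonneg_right
          · exact_mod_cast hcard
          · positivity
      _ = (3 * d * M ^ (d - 1) : ℤ) := by push_cast; ring
  have hlb : -(3 * d * M ^ (d - 1) : ℤ) ≤ ∑ i ∈ SS d lam, rr d lam i := by
    calc -(3 * d * M ^ (d - 1) : ℤ) = -((d : ℤ) * (3 * ((M ^ (d - 1) : ℕ) : ℤ))) := by push_cast; ring
      _ ≤ -(((SS d lam).card : ℤ) * (3 * ((M ^ (d - 1) : ℕ) : ℤ))) := by
          apply neg_le_neg
          apply mul_le_mul_of_nonneg_right
          · exact_mod_cast hcard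
          · positivity
      _ = ∑ _i ∈ SS d lam, -(3 * ((M ^ (d - 1) : ℕ) : ℤ)) := by
          rw [Finset.sum_const, nsmul_eq_mul]; ring
      _ ≤ ∑ i ∈ SS d lam, rr d lam i :=
          Finset.sum_le_sum (fun i _ => (rr_bound d M hM lam h i).1)
  have hcast : ∑ i ∈ SS d lam, (rr d lam i : ℝ)
      = ((∑ i ∈ SS d lam, rr d lam i : ℤ) : ℝ) := by push_cast; rfl
  rw [hcast]
  apply sq_le_sq'
  · have : (((-(3 * d * M ^ (d - 1)) : ℤ)) : ℝ) ≤ ((∑ i ∈ SS d lam, rr d lam i : ℤ) : ℝ) := by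
      exact_mod_cast hlb
    calc -(((3 * d * M ^ (d - 1) : ℕ)) : ℝ) = (((-(3 * d * M ^ (d - 1)) : ℤ)) : ℝ) := by
          push_cast; ring
      _ ≤ _ := this
  · calc ((∑ i ∈ SS d lam, rr d lam i : ℤ) : ℝ) ≤ (((3 * d * M ^ (d - 1) : ℤ)) : ℝ) := by
          exact_mod_cast hub
      _ = (((3 * d * M ^ (d - 1) : ℕ)) : ℝ) := by push_cast; ring

lemma card_Lam_le (d M : ℕ) (hd : 1 ≤ d) : (Lam d M).card ≤ (M + 1) ^ (d - 1) := by
  classical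
  obtain ⟨e, rfl⟩ : ∃ e, d = e + 1 := ⟨d - 1, by omega⟩
  have hmain : (Lam (e + 1) M).card
      ≤ (Fintype.piFinset fun _ : Fin e => Finset.range (M + 1)).card := by
    apply Finset.card_le_card_of_injOn (fun lam (j : Fin e) => lam j.succ)
    · intro lam hlam
      rw [Finset.mem_coe, Fintype.mem_piFinset]
      intro j
      rw [Finset.mem_coe, Lam, Finset.mem_filter] at hlam
      exact (Fintype.mem_piFinset.mp hlam.1) j.succ
    · intro a ha b hb hab
      rw [Finset.mem_coe, Lam, Finset.mem_filter] at ha hb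
      have hsa := ha.2.2
      have hsb := hb.2.2
      rw [Fin.sum_univ_succ] at hsa hsb
      have htail : ∀ j : Fin e, a j.succ = b j.succ := fun j => congrFun hab j
      have hsum_tail : ∑ i : Fin e, a i.succ = ∑ i : Fin e, b i.succ :=
        Finset.sum_congr rfl (fun j _ => htail j)
      have h0 : a 0 = b 0 := by omega
      funext j
      refine Fin.cases h0 (fun i => htail i) j
  calc (Lam (e + 1) M).card ≤ _ := hmain
    _ = (M + 1) ^ e := by
        rw [Fintype.card_piFinset]
        simp
    _ = (M + 1) ^ (e + 1 - 1) := by norm_num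


end Stmt12Aux

open Stmt12Aux in
/-- t₂ = O(1/N²): there are `K` and `N₀` such that for all `N ≥ N₀`,
`Σ_{λ'} (Σ_{i∈S(λ')} r_{λ'}(i))² ≤ (K/N²)·Σ_{λ'} (#S(λ'))²·∏_j p_j(λ')²`. -/
theorem stmt12 (d : ℕ) (hd : 2 ≤ d) :
    ∃ K : ℝ, ∃ N₀ : ℕ, ∀ N : ℕ, N₀ ≤ N →
      ∑ lam' ∈ Lam d (N + 1), (∑ i ∈ SS d lam', (rr d lam' i : ℝ)) ^ 2
        ≤ (K / N ^ 2) * ∑ lam' ∈ Lam d (N + 1),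
            ((SS d lam').card : ℝ) ^ 2 * ∏ j, (pgap d lam' j : ℝ) ^ 2 := by
  classical
  refine ⟨((9 * d ^ 2 * 2 ^ (3 * d - 3) * (8 * d ^ 2) ^ (3 * d - 1) : ℕ) : ℝ), 8 * d ^ 2, ?_⟩
  intro N hN
  have hdsq : 4 ≤ d ^ 2 := by nlinarith
  have hN32 : 32 ≤ N := by nlinarith
  set m := N / (4 * d ^ 2) with hmdef
  have hd4 : 0 < 4 * d ^ 2 := by positivity
  have hm1 : 1 ≤ m := by
    rw [hmdef, Nat.one_le_div_iff hd4]
    nlinarith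
  have key : 4 * d ^ 2 * m ≤ N := by
    rw [hmdef, mul_comm]
    exact Nat.div_mul_le_self N (4 * d ^ 2)
  have hN8 : N ≤ 8 * d ^ 2 * m := by
    have h1 := Nat.div_add_mod N (4 * d ^ 2)
    have h2 : N % (4 * d ^ 2) < 4 * d ^ 2 := Nat.mod_lt _ hd4
    have h3 : 4 * d ^ 2 * 1 ≤ 4 * d ^ 2 * m := Nat.mul_le_mul_left _ hm1
    rw [← hmdef] at h1
    linarith
  set Rn := ∑ lam ∈ Lam d (N + 1), (SS d lam).card ^ 2 * ∏ j, (pgap d lam j) ^ 2 with hRndef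
  have hR : m ^ (3 * d - 1) ≤ Rn := Rn_ge d N m hd hm1 key
  have hsum : ∑ lam' ∈ Lam d (N + 1), (∑ i ∈ SS d lam', (rr d lam' i : ℝ)) ^ 2
      ≤ ((Lam d (N + 1)).card : ℝ) * ((3 * d * (N + 1) ^ (d - 1) : ℕ) : ℝ) ^ 2 := by
    have h := Finset.sum_le_card_nsmul (Lam d (N + 1)) _
      (((3 * d * (N + 1) ^ (d - 1) : ℕ) : ℝ) ^ 2)
      (fun lam hlam => sum_rr_sq_le d (N + 1) (by omega) lam hlam)
    simpa [nsmul_eq_mul] using h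
  have hcard : (Lam d (N + 1)).card ≤ (N + 2) ^ (d - 1) := by
    have h := card_Lam_le d (N + 1) (by omega)
    have e : N + 1 + 1 = N + 2 := by omega
    rwa [e] at h
  have master : ((N + 2) ^ (d - 1) * (3 * d * (N + 1) ^ (d - 1)) ^ 2) * N ^ 2
      ≤ (9 * d ^ 2 * 2 ^ (3 * d - 3) * (8 * d ^ 2) ^ (3 * d - 1)) * Rn := by
    have hN2 : N + 2 ≤ 2 * N := by omega
    have hN1 : N + 1 ≤ 2 * N := by omega
    have step1 : ((N + 2) ^ (d - 1) * (3 * d * (N + 1) ^ (d - 1)) ^ 2) * N ^ 2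
        ≤ ((2 * N) ^ (d - 1) * (3 * d * (2 * N) ^ (d - 1)) ^ 2) * N ^ 2 := by
      gcongr
    have step2 : ((2 * N) ^ (d - 1) * (3 * d * (2 * N) ^ (d - 1)) ^ 2) * N ^ 2
        = 9 * d ^ 2 * (2 * N) ^ (3 * d - 3) * N ^ 2 := by
      have e1 : (d - 1) + ((d - 1) + (d - 1)) = 3 * d - 3 := by omega
      calc ((2 * N) ^ (d - 1) * (3 * d * (2 * N) ^ (d - 1)) ^ 2) * N ^ 2
          = 9 * d ^ 2 * ((2 * N) ^ (d - 1) * ((2 * N) ^ (d - 1) * (2 * N) ^ (d - 1))) * N ^ 2 := by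
            ring
        _ = 9 * d ^ 2 * (2 * N) ^ ((d - 1) + ((d - 1) + (d - 1))) * N ^ 2 := by
            rw [pow_add, pow_add]
        _ = _ := by rw [e1]
    have step3 : (9 : ℕ) * d ^ 2 * (2 * N) ^ (3 * d - 3) * N ^ 2
        = 9 * d ^ 2 * 2 ^ (3 * d - 3) * N ^ (3 * d - 1) := by
      have e2 : (3 * d - 3) + 2 = 3 * d - 1 := by omega
      calc 9 * d ^ 2 * (2 * N) ^ (3 * d - 3) * N ^ 2
          = 9 * d ^ 2 * (2 ^ (3 * d - 3) * N ^ (3 * d - 3)) * N ^ 2 := by rw [mul_pow]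
        _ = 9 * d ^ 2 * 2 ^ (3 * d - 3) * (N ^ (3 * d - 3) * N ^ 2) := by ring
        _ = 9 * d ^ 2 * 2 ^ (3 * d - 3) * N ^ ((3 * d - 3) + 2) := by rw [pow_add]
        _ = _ := by rw [e2]
    have step4 : N ^ (3 * d - 1) ≤ (8 * d ^ 2) ^ (3 * d - 1) * m ^ (3 * d - 1) := by
      rw [← mul_pow]
      exact Nat.pow_le_pow_left hN8 _
    calc ((N + 2) ^ (d - 1) * (3 * d * (N + 1) ^ (d - 1)) ^ 2) * N ^ 2 ≤ _ := step1
      _ = 9 * d ^ 2 * (2 * N) ^ (3 * d - 3) * N ^ 2 := step2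
      _ = 9 * d ^ 2 * 2 ^ (3 * d - 3) * N ^ (3 * d - 1) := step3
      _ ≤ 9 * d ^ 2 * 2 ^ (3 * d - 3) * ((8 * d ^ 2) ^ (3 * d - 1) * m ^ (3 * d - 1)) :=
          Nat.mul_le_mul_left _ step4
      _ ≤ 9 * d ^ 2 * 2 ^ (3 * d - 3) * ((8 * d ^ 2) ^ (3 * d - 1) * Rn) := by
          exact Nat.mul_le_mul_left _ (Nat.mul_le_mul_left _ hR)
      _ = (9 * d ^ 2 * 2 ^ (3 * d - 3) * (8 * d ^ 2) ^ (3 * d - 1)) * Rn := by ring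
  have hNR : (0 : ℝ) < (N : ℝ) := by
    have : 0 < N := by omega
    exact_mod_cast this
  have hNpos : (0 : ℝ) < (N : ℝ) ^ 2 := by positivity
  rw [div_mul_eq_mul_div, le_div_iff₀ hNpos]
  have hRcast : ∑ lam' ∈ Lam d (N + 1),
      ((SS d lam').card : ℝ) ^ 2 * ∏ j, ((pgap d lam' j : ℕ) : ℝ) ^ 2 = (Rn : ℝ) := by
    rw [hRndef]
    push_cast
    rfl
  calc (∑ lam' ∈ Lam d (N + 1), (∑ i ∈ SS d lam', (rr d lam' i : ℝ)) ^ 2) * (N : ℝ) ^ 2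
      ≤ (((Lam d (N + 1)).card : ℝ) * ((3 * d * (N + 1) ^ (d - 1) : ℕ) : ℝ) ^ 2) * (N : ℝ) ^ 2 :=
        mul_le_mul_of_nonneg_right hsum (by positivity)
    _ ≤ ((((N + 2) ^ (d - 1) : ℕ) : ℝ) * ((3 * d * (N + 1) ^ (d - 1) : ℕ) : ℝ) ^ 2) * (N : ℝ) ^ 2 := by
        apply mul_le_mul_of_nonneg_right _ (by positivity)
        apply mul_le_mul_of_nonneg_right _ (by positivity)
        exact_mod_cast hcard
    _ = ((((N + 2) ^ (d - 1) * (3 * d * (N + 1) ^ (d - 1)) ^ 2) * N ^ 2 : ℕ) : ℝ) := by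
        push_cast
        ring
    _ ≤ (((9 * d ^ 2 * 2 ^ (3 * d - 3) * (8 * d ^ 2) ^ (3 * d - 1)) * Rn : ℕ) : ℝ) := by
        exact_mod_cast master
    _ = ((9 * d ^ 2 * 2 ^ (3 * d - 3) * (8 * d ^ 2) ^ (3 * d - 1) : ℕ) : ℝ) *
        ∑ lam' ∈ Lam d (N + 1), ((SS d lam').card : ℝ) ^ 2 * ∏ j, (pgap d lam' j : ℝ) ^ 2 := by
        rw [hRcast]
        push_cast
        ring
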